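/- Let G be a regular distribution function and H a distribution function with sup_{x ∈ ℝ} |G(x)^n − H(x)^n| → 0 as n → ∞. Then H is regular, G and H have the same right endpoint, and (1 − H(x))/(1 − G(x)) → 1 as x → G_*−. -/

import Mathlib

open Filter Topology Classical

/-- A distribution function: nondecreasing, right-continuous, limits 0 and 1. -/
def IsDistFun (G : ℝ → ℝ) : Prop :=
  Monotone G ∧ (∀ x, ContinuousWithinAt G (Set.Ici x) x) ∧
    Tendsto G atBot (𝓝 0) ∧ Tendsto G atTop (𝓝 1)

/-- The filter of approach to the right endpoint `G_* = sup {x : G x < 1}` from the left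
(`atTop` if the endpoint is `+∞`). -/
noncomputable def endFilter (G : ℝ → ℝ) : Filter ℝ :=
  if BddAbove {x | G x < 1} then 𝓝[<] (sSup {x | G x < 1}) else atTop

/-- Regularity in the sense of O'Brien: `G(G_*−) = 1` and `(1−G(x−))/(1−G(x)) → 1`
as `x → G_*−`. -/
def RegularDF (G : ℝ → ℝ) : Prop :=
  Tendsto G (endFilter G) (𝓝 1) ∧
  Tendsto (fun x => (1 - Function.leftLim G x) / (1 - G x)) (endFilter G) (𝓝 1)

/-- Strict tail-equivalence: same right endpoint and `(1−H(x))/(1−G(x)) → 1` at the endpoint. -/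
def StrictTailEquiv (G H : ℝ → ℝ) : Prop :=
  (BddAbove {x | G x < 1} ↔ BddAbove {x | H x < 1}) ∧
  sSup {x | G x < 1} = sSup {x | H x < 1} ∧
  Tendsto (fun x => (1 - H x) / (1 - G x)) (endFilter G) (𝓝 1)

lemma distFun_nonneg {G : ℝ → ℝ} (hG : IsDistFun G) (x : ℝ) : 0 ≤ G x :=
  le_of_tendsto hG.2.2.1 (eventually_atBot.2 ⟨x, fun y hy => hG.1 hy⟩)

lemma distFun_le_one {G : ℝ → ℝ} (hG : IsDistFun G) (x : ℝ) : G x ≤ 1 :=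
  ge_of_tendsto hG.2.2.2 (eventually_atTop.2 ⟨x, fun y hy => hG.1 hy⟩)

lemma distFun_exists_lt_one {G : ℝ → ℝ} (hG : IsDistFun G) : ∃ x, G x < 1 :=
  (hG.2.2.1.eventually (Iio_mem_nhds one_pos)).exists

lemma distFun_eventually_lt_one {G : ℝ → ℝ} (hG : IsDistFun G) :
    ∀ᶠ x in endFilter G, G x < 1 := by
  unfold endFilter
  split_ifs with hb
  · filter_upwards [self_mem_nhdsWithin] with x (hx : x < _)
    obtain ⟨y, hy, hxy⟩ := exists_lt_of_lt_csSup (by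
      obtain ⟨z, hz⟩ := distFun_exists_lt_one hG; exact ⟨z, hz⟩) hx
    exact lt_of_le_of_lt (hG.1 hxy.le) hy
  · refine Eventually.of_forall fun x => ?_
    obtain ⟨y, hy, hxy⟩ := not_bddAbove_iff.1 hb x
    exact lt_of_le_of_lt (hG.1 hxy.le) hy

lemma endFilter_neBot (G : ℝ → ℝ) : (endFilter G).NeBot := by
  unfold endFilter; split_ifs <;> infer_instance

lemma endFilter_propagate (G : ℝ → ℝ) {p : ℝ → Prop}
    (h : ∀ᶠ y in endFilter G, p y) :
    ∀ᶠ x in endFilter G, ∀ᶠ y in 𝓝[<] x, p y := by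
  unfold endFilter at *
  split_ifs at * with hb
  · obtain ⟨l, hl, hsub⟩ := mem_nhdsLT_iff_exists_Ioo_subset.1 h
    have : Set.Ioo l (sSup {x | G x < 1}) ∈ 𝓝[<] (sSup {x | G x < 1}) :=
      Ioo_mem_nhdsLT_of_mem ⟨hl, le_rfl⟩
    filter_upwards [this] with x hx
    filter_upwards [Ioo_mem_nhdsLT_of_mem (⟨hx.1, le_rfl⟩ : x ∈ Set.Ioc l x)] with y hy
    exact hsub ⟨hy.1, hy.2.trans hx.2⟩
  · obtain ⟨a, ha⟩ := eventually_atTop.1 h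
    filter_upwards [eventually_gt_atTop a] with x hx
    filter_upwards [Ioo_mem_nhdsLT_of_mem (⟨hx, le_rfl⟩ : x ∈ Set.Ioc a x)] with y hy
    exact ha y hy.1.le

lemma abs_pow_sub_pow_le_one {a b : ℝ} (ha : 0 ≤ a) (ha1 : a ≤ 1) (hb : 0 ≤ b)
    (hb1 : b ≤ 1) (n : ℕ) : |a ^ n - b ^ n| ≤ 1 := by
  have h1 : a ^ n ≤ 1 := pow_le_one₀ ha ha1
  have h2 : b ^ n ≤ 1 := pow_le_one₀ hb hb1
  have h3 : 0 ≤ a ^ n := pow_nonneg ha n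
  have h4 : 0 ≤ b ^ n := pow_nonneg hb n
  rw [abs_le]; constructor <;> linarith

lemma pointwise_le_sup {G H : ℝ → ℝ} (hG : IsDistFun G) (hH : IsDistFun H)
    (n : ℕ) (x : ℝ) : |G x ^ n - H x ^ n| ≤ ⨆ y : ℝ, |G y ^ n - H y ^ n| := by
  apply le_ciSup (f := fun y => |G y ^ n - H y ^ n|)
  exact ⟨1, Set.forall_mem_range.2 fun y => abs_pow_sub_pow_le_one (distFun_nonneg hG y)
    (distFun_le_one hG y) (distFun_nonneg hH y) (distFun_le_one hH y) n⟩

lemma set_eq_aux {G H : ℝ → ℝ} (hG : IsDistFun G) (hH : IsDistFun H)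
    (hsup : Tendsto (fun n : ℕ => ⨆ x : ℝ, |G x ^ n - H x ^ n|) atTop (𝓝 0))
    {x : ℝ} (hx : G x < 1) : H x < 1 := by
  by_contra h
  have hH1 : H x = 1 := le_antisymm (distFun_le_one hH x) (not_lt.1 h)
  have h1 : Tendsto (fun n : ℕ => G x ^ n) atTop (𝓝 0) :=
    tendsto_pow_atTop_nhds_zero_of_lt_one (distFun_nonneg hG x) hx
  have h2 : Tendsto (fun n : ℕ => ⨆ y : ℝ, |G y ^ n - H y ^ n|) atTop (𝓝 0) := hsup
  have := ((h1.add h2).eventually (Iio_mem_nhds (by norm_num : (0:ℝ) + 0 < 1))).and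
    (Eventually.of_forall (pointwise_le_sup hG hH · x))
  obtain ⟨n, hn1, hn2⟩ := this.exists
  rw [hH1] at hn2
  simp only [one_pow] at hn2
  have h3 : 0 ≤ G x ^ n := pow_nonneg (distFun_nonneg hG x) n
  have h4 : G x ^ n ≤ 1 := pow_le_one₀ (distFun_nonneg hG x) (distFun_le_one hG x)
  rw [abs_sub_comm, abs_of_nonneg (by linarith)] at hn2
  linarith

lemma tail_ratio {G H : ℝ → ℝ} (hG : IsDistFun G) (hH : IsDistFun H)
    (hG1 : Tendsto G (endFilter G) (𝓝 1))
    (hsup : Tendsto (fun n : ℕ => ⨆ x : ℝ, |G x ^ n - H x ^ n|) atTop (𝓝 0)) :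
    Tendsto (fun x => ((1:ℝ) - H x) / (1 - G x)) (endFilter G) (𝓝 1) ∧
    Tendsto H (endFilter G) (𝓝 1) := by
  set F := endFilter G with hF
  set n : ℝ → ℕ := fun x => ⌈(1 - G x)⁻¹⌉₊ with hn_def
  have hlt : ∀ᶠ x in F, G x < 1 := distFun_eventually_lt_one hG
  have hHlt : ∀ᶠ x in F, H x < 1 := hlt.mono fun x hx => set_eq_aux hG hH hsup hx
  -- n → ∞
  have h0 : Tendsto (fun x => 1 - G x) F (𝓝[>] 0) := by
    rw [tendsto_nhdsWithin_iff]
    constructor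
    · have := (tendsto_const_nhds (x := (1:ℝ)) (f := F)).sub hG1
      simpa using this
    · filter_upwards [hlt] with x hx; simpa using hx
  have hinv : Tendsto (fun x => (1 - G x)⁻¹) F atTop := tendsto_inv_nhdsGT_zero.comp h0
  have hn : Tendsto (fun x => (n x : ℝ)) F atTop :=
    tendsto_atTop_mono (fun x => Nat.le_ceil _) hinv
  have hnN : Tendsto n F atTop := tendsto_natCast_atTop_iff.1 hn
  -- t1 : n (1-G) → 1
  have t1 : Tendsto (fun x => (n x : ℝ) * (1 - G x)) F (𝓝 1) := by
    apply tendsto_of_tendsto_of_tendsto_of_le_of_le'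
      (tendsto_const_nhds (x := (1:ℝ)))
      (show Tendsto (fun x => 2 - G x) F (𝓝 1) by
        have := (tendsto_const_nhds (x := (2:ℝ)) (f := F)).sub hG1
        norm_num at this; exact this)
    · filter_upwards [hlt] with x hx
      have hpos : 0 < 1 - G x := by linarith
      have := mul_le_mul_of_nonneg_right (Nat.le_ceil ((1 - G x)⁻¹)) hpos.le
      rwa [inv_mul_cancel₀ hpos.ne'] at this
    · filter_upwards [hlt] with x hx
      have hpos : 0 < 1 - G x := by linarith
      have h1 : ((n x : ℝ)) < (1 - G x)⁻¹ + 1 :=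
        Nat.ceil_lt_add_one (by positivity)
      have := mul_lt_mul_of_pos_right h1 hpos
      rw [add_mul, inv_mul_cancel₀ hpos.ne'] at this
      linarith
  -- slope of log at 1 composed with G
  have hslope : Tendsto (fun y => slope Real.log 1 y) (𝓝[≠] (1:ℝ)) (𝓝 1) := by
    have := hasDerivAt_iff_tendsto_slope.1 (Real.hasDerivAt_log one_ne_zero)
    simpa using this
  have hGn1 : Tendsto G F (𝓝[≠] (1:ℝ)) := by
    rw [tendsto_nhdsWithin_iff]
    exact ⟨hG1, hlt.mono fun x hx => hx.ne⟩
  have hslopeG : Tendsto (fun x => slope Real.log 1 (G x)) F (𝓝 1) := hslope.comp hGn1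
  -- t2 : n log G → -1
  have t2 : Tendsto (fun x => (n x : ℝ) * Real.log (G x)) F (𝓝 (-1)) := by
    have base : Tendsto (fun x => -((n x : ℝ) * (1 - G x)) * slope Real.log 1 (G x))
        F (𝓝 (-1)) := by
      have := (t1.neg).mul hslopeG
      simpa using this
    apply base.congr'
    filter_upwards [hlt] with x hx
    have hne : G x - 1 ≠ 0 := sub_ne_zero.2 hx.ne
    rw [slope_def_field, Real.log_one, sub_zero]
    field_simp
    ring
  -- t3 : G^n → e⁻¹
  have hGpos : ∀ᶠ x in F, 0 < G x := hG1.eventually (eventually_gt_nhds one_pos)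
  have t3 : Tendsto (fun x => G x ^ n x) F (𝓝 (Real.exp (-1))) := by
    have base : Tendsto (fun x => Real.exp ((n x : ℝ) * Real.log (G x))) F
        (𝓝 (Real.exp (-1))) := (Real.continuous_exp.tendsto _).comp t2
    apply base.congr'
    filter_upwards [hGpos] with x hx
    rw [Real.exp_nat_mul, Real.exp_log hx]
  -- sup along n → 0
  have epsn : Tendsto (fun x => ⨆ y : ℝ, |G y ^ n x - H y ^ n x|) F (𝓝 0) :=
    hsup.comp hnN
  -- t4 : H^n → e⁻¹
  have hdiff : Tendsto (fun x => H x ^ n x - G x ^ n x) F (𝓝 0) := by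
    apply squeeze_zero_norm _ epsn
    intro x
    rw [Real.norm_eq_abs, abs_sub_comm]
    exact pointwise_le_sup hG hH (n x) x
  have t4 : Tendsto (fun x => H x ^ n x) F (𝓝 (Real.exp (-1))) := by
    have := t3.add hdiff
    rw [add_zero] at this
    apply this.congr
    intro x; ring
  -- H > 0 eventually
  have hn1 : ∀ᶠ x in F, 1 ≤ n x := hnN.eventually_ge_atTop 1
  have hHpos : ∀ᶠ x in F, 0 < H x := by
    filter_upwards [t4.eventually (eventually_gt_nhds (Real.exp_pos (-1)))
      |>.and hn1] with x ⟨hx1, hx2⟩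
    rcases lt_or_eq_of_le (distFun_nonneg hH x) with h | h
    · exact h
    · exfalso
      rw [← h, zero_pow (by omega : n x ≠ 0)] at hx1
      linarith
  -- t5 : n log H → -1
  have t5 : Tendsto (fun x => (n x : ℝ) * Real.log (H x)) F (𝓝 (-1)) := by
    have base : Tendsto (fun x => Real.log (H x ^ n x)) F (𝓝 (-1)) := by
      have := (Real.continuousAt_log (Real.exp_pos (-1)).ne').tendsto.comp t4
      rwa [Real.log_exp] at this
    apply base.congr'
    filter_upwards with x
    rw [Real.log_pow]
  -- t6 : log H → 0
  have t6 : Tendsto (fun x => Real.log (H x)) F (𝓝 0) := by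
    have base := t5.div_atTop hn
    apply base.congr'
    filter_upwards [hn1] with x hx
    have : ((n x : ℝ)) ≠ 0 := by positivity
    field_simp
  -- t7 : H → 1
  have t7 : Tendsto H F (𝓝 1) := by
    have base : Tendsto (fun x => Real.exp (Real.log (H x))) F (𝓝 1) := by
      have := (Real.continuous_exp.tendsto _).comp t6
      rwa [Real.exp_zero] at this
    apply base.congr'
    filter_upwards [hHpos] with x hx
    rw [Real.exp_log hx]
  -- slope for H
  have hHn1' : Tendsto H F (𝓝[≠] (1:ℝ)) := by
    rw [tendsto_nhdsWithin_iff]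
    exact ⟨t7, hHlt.mono fun x hx => hx.ne⟩
  have hslopeH : Tendsto (fun x => slope Real.log 1 (H x)) F (𝓝 1) := hslope.comp hHn1'
  -- t8 : n (1 - H) → 1
  have t8 : Tendsto (fun x => (n x : ℝ) * (1 - H x)) F (𝓝 1) := by
    have base : Tendsto (fun x => -((n x : ℝ) * Real.log (H x)) / slope Real.log 1 (H x))
        F (𝓝 1) := by
      have := (t5.neg).div hslopeH one_ne_zero
      norm_num at this; exact this
    apply base.congr'
    filter_upwards [hHlt, hHpos] with x hx1 hx2
    have hlog : Real.log (H x) ≠ 0 := (Real.log_neg hx2 hx1).ne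
    have hne : H x - 1 ≠ 0 := sub_ne_zero.2 hx1.ne
    rw [slope_def_field, Real.log_one, sub_zero]
    field_simp
    ring
  -- final
  have hfinal : Tendsto (fun x => ((1:ℝ) - H x) / (1 - G x)) F (𝓝 1) := by
    have base := t8.div t1 one_ne_zero
    rw [div_one] at base
    apply base.congr'
    filter_upwards [hn1] with x hx
    have : ((n x : ℝ)) ≠ 0 := by positivity
    show (n x : ℝ) * (1 - H x) / ((n x : ℝ) * (1 - G x)) = _
    rw [mul_div_mul_left _ _ this]
  exact ⟨hfinal, t7⟩


theorem stmt3 (G H : ℝ → ℝ) (hG : IsDistFun G) (hGreg : RegularDF G)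
    (hH : IsDistFun H)
    (hsup : Tendsto (fun n : ℕ => ⨆ x : ℝ, |G x ^ n - H x ^ n|) atTop (𝓝 0)) :
    RegularDF H ∧ StrictTailEquiv G H := by
  have hsup' : Tendsto (fun n : ℕ => ⨆ x : ℝ, |H x ^ n - G x ^ n|) atTop (𝓝 0) := by
    simpa only [abs_sub_comm] using hsup
  have hsetEq : {x | G x < 1} = {x | H x < 1} :=
    Set.ext fun x => ⟨fun hx => set_eq_aux hG hH hsup hx, fun hx => set_eq_aux hH hG hsup' hx⟩
  have hFeq : endFilter H = endFilter G := by
    unfold endFilter; rw [hsetEq]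
  obtain ⟨hratio, hH1⟩ := tail_ratio hG hH hGreg.1 hsup
  set F := endFilter G with hF
  have hlt : ∀ᶠ x in F, G x < 1 := distFun_eventually_lt_one hG
  have hHlt : ∀ᶠ x in F, H x < 1 := hlt.mono fun x hx => set_eq_aux hG hH hsup hx
  -- the left-limit part of regularity of H
  have hreg2 : Tendsto (fun x => (1 - Function.leftLim H x) / (1 - H x)) F (𝓝 1) := by
    rw [Metric.tendsto_nhds]
    intro ε hε
    set c : ℝ := 1 + ε / 2 with hc
    have hc1 : (1:ℝ) < c := by rw [hc]; linarith
    have hcε : c < 1 + ε := by rw [hc]; linarith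
    -- r ≥ 1 eventually
    have hrle : ∀ᶠ x in F, 1 ≤ (1 - Function.leftLim H x) / (1 - H x) := by
      filter_upwards [hHlt] with x hx
      have hpos : 0 < 1 - H x := by linarith
      have hll : Function.leftLim H x ≤ H x := hH.1.leftLim_le le_rfl
      rw [le_div_iff₀ hpos]; linarith
    -- c * A * B → c < 1 + ε
    have hBinv : Tendsto (fun x => (1 - G x) / (1 - H x)) F (𝓝 1) := by
      have := hratio.inv₀ one_ne_zero
      rw [inv_one] at this
      apply this.congr
      intro x
      rw [inv_div]
    have hAB : Tendsto (fun x => c * ((1 - Function.leftLim G x) / (1 - G x)) *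
        ((1 - G x) / (1 - H x))) F (𝓝 c) := by
      have := ((tendsto_const_nhds (x := c) (f := F)).mul hGreg.2).mul hBinv
      simpa using this
    have hABlt : ∀ᶠ x in F, c * ((1 - Function.leftLim G x) / (1 - G x)) *
        ((1 - G x) / (1 - H x)) < 1 + ε := hAB.eventually (eventually_lt_nhds hcε)
    -- tail dominance, propagated to left-neighborhoods
    have hycond : ∀ᶠ y in F, 1 - H y ≤ c * (1 - G y) := by
      filter_upwards [hratio.eventually (eventually_lt_nhds hc1), hlt] with y hy1 hy2
      have hpos : 0 < 1 - G y := by linarith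
      rw [div_lt_iff₀ hpos] at hy1
      linarith
    have hprop : ∀ᶠ x in F, ∀ᶠ y in 𝓝[<] x, 1 - H y ≤ c * (1 - G y) :=
      endFilter_propagate G hycond
    filter_upwards [hrle, hABlt, hprop, hHlt, hlt] with x h1 h2 h3 h4 h5
    have hHpos : 0 < 1 - H x := by linarith
    have hGpos : 0 < 1 - G x := by linarith
    have key : 1 - Function.leftLim H x ≤ c * (1 - Function.leftLim G x) := by
      have tH : Tendsto (fun y => 1 - H y) (𝓝[<] x) (𝓝 (1 - Function.leftLim H x)) :=
        tendsto_const_nhds.sub (hH.1.tendsto_leftLim x)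
      have tG : Tendsto (fun y => c * (1 - G y)) (𝓝[<] x)
          (𝓝 (c * (1 - Function.leftLim G x))) :=
        tendsto_const_nhds.mul (tendsto_const_nhds.sub (hG.1.tendsto_leftLim x))
      exact le_of_tendsto_of_tendsto tH tG h3
    have e1 : c * ((1 - Function.leftLim G x) / (1 - G x)) * ((1 - G x) / (1 - H x)) =
        c * (1 - Function.leftLim G x) / (1 - H x) := by
      field_simp
    rw [e1] at h2
    have hr_ub : (1 - Function.leftLim H x) / (1 - H x) < 1 + ε :=
      lt_of_le_of_lt ((div_le_div_iff_of_pos_right hHpos).2 key) h2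
    rw [Real.dist_eq, abs_lt]
    constructor <;> [linarith; linarith]
  refine ⟨⟨?_, ?_⟩, ?_, ?_, hratio⟩
  · rw [hFeq]; exact hH1
  · rw [hFeq]; exact hreg2
  · rw [hsetEq]
  · rw [hsetEq]
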